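/- Let (a_n) be a sequence of pmp actions of a countable group G on probability spaces, let u be a nonprincipal ultrafilter on ℕ, and let a_u be the ultraproduct action on the Loeb measure space (X_u, μ_u). Then a_u is the WC-limit of (a_n) along u: for every finite subset F ⊆ G, (i) for every finite μ_u-measurable partition α of X_u, lim_u d_{F,α}(a_u, a_n) = 0, and (ii) for every k ∈ ℕ, lim_u d_{F,k}(a_n, a_u) = 0. -/

import Mathlib

open MeasureTheory Filter Topology
open scoped ENNReal symmDiff



/-! Ultraproducts of sets and the Loeb outer measure. -/

/-- The equivalence relation on `∀ n, X n` identifying sequences that agree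
`u`-almost everywhere. -/
def uRel (u : Ultrafilter ℕ) {X : ℕ → Type*} (x y : ∀ n, X n) : Prop :=
  ∀ᶠ n in (u : Filter ℕ), x n = y n

/-- The (set-theoretic) ultraproduct of the family `X n` with respect to the
ultrafilter `u`: the quotient of `∀ n, X n` by the relation identifying sequences
which agree `u`-almost everywhere. -/
def UProd (u : Ultrafilter ℕ) (X : ℕ → Type*) : Type _ :=
  Quot (uRel u (X := X))

/-- The class `[x_n]_u` of a sequence in the ultraproduct. -/
def uMk (u : Ultrafilter ℕ) {X : ℕ → Type*} (x : ∀ n, X n) : UProd u X :=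
  Quot.mk _ x

/-- The subset `[A_n]_u` of the ultraproduct determined by a sequence of subsets
`A n ⊆ X n`: the set of classes of sequences which belong to `A n` for `u`-almost
every `n`. -/
def uSet (u : Ultrafilter ℕ) {X : ℕ → Type*} (A : ∀ n, Set (X n)) : Set (UProd u X) :=
  {z | ∃ x : ∀ n, X n, uMk u x = z ∧ ∀ᶠ n in (u : Filter ℕ), x n ∈ A n}

/-- The limit of a sequence of extended nonnegative reals along the ultrafilter `u`
(it always exists since `ℝ≥0∞` is a compact Hausdorff space). -/
noncomputable def ulim (u : Ultrafilter ℕ) (f : ℕ → ℝ≥0∞) : ℝ≥0∞ :=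
  (u.map f).lim

/-- The Loeb outer measure `θ` on the ultraproduct: the infimum, over countable
covers of `A` by sets of the form `[B^i_n]_u` with all `B^i_n` measurable, of
`∑ᵢ lim_u μ_n (B^i_n)`. -/
noncomputable def loebOuter (u : Ultrafilter ℕ) {X : ℕ → Type*}
    [∀ n, MeasurableSpace (X n)] (μ : ∀ n, Measure (X n)) (A : Set (UProd u X)) : ℝ≥0∞ :=
  ⨅ (B : ℕ → ∀ n, Set (X n)) (_ : (∀ i n, MeasurableSet (B i n)) ∧
      A ⊆ ⋃ i, uSet u (B i)), ∑' i, ulim u fun n => μ n (B i n)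

/-- Carathéodory measurability with respect to the Loeb outer measure. -/
def LoebMeasurable (u : Ultrafilter ℕ) {X : ℕ → Type*}
    [∀ n, MeasurableSpace (X n)] (μ : ∀ n, Measure (X n)) (A : Set (UProd u X)) : Prop :=
  ∀ S : Set (UProd u X), loebOuter u μ (S ∩ A) + loebOuter u μ (S \ A) ≤ loebOuter u μ S

/-- The map on the ultraproduct induced by a sequence of maps `g n : X n → X n`. -/
def uMap (u : Ultrafilter ℕ) {X : ℕ → Type*} (g : ∀ n, X n → X n) :
    UProd u X → UProd u X :=
  Quot.lift (fun x => uMk u fun n => g n (x n))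
    (fun x y h => Quot.sound (h.mono fun n hn => by simpa using congrArg (g n) hn))


/-! Probability-measure-preserving actions, partitions, and weak containment. -/

/-- `a` is a probability-measure-preserving (pmp) action of the group `G` on the
measure space `(X, μ)`. -/
def IsPMP {G : Type*} [Group G] {X : Type*} [MeasurableSpace X]
    (μ : Measure X) (a : G → X → X) : Prop :=
  (∀ g : G, MeasurePreserving (a g) μ μ) ∧ (∀ x, a 1 x = x) ∧
    ∀ (g h : G) (x : X), a (g * h) x = a g (a h x)

/-- The translate `g · A` of a subset `A` under the action `a`. -/
def actSet {G X : Type*} (a : G → X → X) (g : G) (A : Set X) : Set X :=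
  a g '' A

/-- An (exact) finite measurable partition of `X` with `k` atoms. -/
def IsPartition {X : Type*} [MeasurableSpace X] {k : ℕ} (P : Fin k → Set X) : Prop :=
  (∀ i, MeasurableSet (P i)) ∧ Pairwise (Function.onFun Disjoint P) ∧ ⋃ i, P i = Set.univ

/-- `‖c(a,F,P) - c(b,F,Q)‖₁ = ∑_{i,j ≤ k} ∑_{f ∈ F} |μ(Pᵢ ∩ f·Pⱼ) - ν(Qᵢ ∩ f·Qⱼ)|`,
the `ℓ¹`-distance between the `F`-statistics of the two partitions. -/
noncomputable def statDist {G : Type*} {X Y : Type*} [MeasurableSpace X] [MeasurableSpace Y]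
    (μ : Measure X) (a : G → X → X) (ν : Measure Y) (b : G → Y → Y)
    (F : Finset G) {k : ℕ} (P : Fin k → Set X) (Q : Fin k → Set Y) : ℝ :=
  ∑ i : Fin k, ∑ j : Fin k, ∑ f ∈ F,
    |(μ (P i ∩ actSet a f (P j))).toReal - (ν (Q i ∩ actSet b f (Q j))).toReal|

/-- `d_{F,P}(a,b)`: the infimum over `k`-atom partitions `Q` of `X_b` of
`‖c(a,F,P) - c(b,F,Q)‖₁`. -/
noncomputable def dPart {G : Type*} {X Y : Type*} [MeasurableSpace X] [MeasurableSpace Y]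
    (μ : Measure X) (a : G → X → X) (ν : Measure Y) (b : G → Y → Y)
    (F : Finset G) {k : ℕ} (P : Fin k → Set X) : ℝ :=
  sInf {r : ℝ | ∃ Q : Fin k → Set Y, IsPartition Q ∧ r = statDist μ a ν b F P Q}

/-- `d_{F,k}(a,b)`: the supremum over `k`-atom partitions `P` of `X_a` of `d_{F,P}(a,b)`. -/
noncomputable def dNum {G : Type*} {X Y : Type*} [MeasurableSpace X] [MeasurableSpace Y]
    (μ : Measure X) (a : G → X → X) (ν : Measure Y) (b : G → Y → Y)
    (F : Finset G) (k : ℕ) : ℝ :=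
  sSup {r : ℝ | ∃ P : Fin k → Set X, IsPartition P ∧ r = dPart μ a ν b F P}

/-- Weak containment `a ≺ b` of pmp actions: every finite partition of `X_a` and
every finite set of group elements can be `ε`-simulated by a partition of `X_b`. -/
def WC {G : Type*} {X Y : Type*} [MeasurableSpace X] [MeasurableSpace Y]
    (μ : Measure X) (a : G → X → X) (ν : Measure Y) (b : G → Y → Y) : Prop :=
  ∀ ε : ℝ, 0 < ε → ∀ (F : Finset G) (k : ℕ) (P : Fin k → Set X), IsPartition P →
    ∃ Q : Fin k → Set Y, IsPartition Q ∧ statDist μ a ν b F P Q ≤ ε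

/-- The measure `μ` is diffuse (atomless in the sense of measure algebras):
every non-null measurable set contains a measurable subset of strictly
intermediate measure. -/
def Diffuse {X : Type*} [MeasurableSpace X] (μ : Measure X) : Prop :=
  ∀ A : Set X, MeasurableSet A → μ A ≠ 0 →
    ∃ B : Set X, MeasurableSet B ∧ B ⊆ A ∧ 0 < μ B ∧ μ B < μ A

/-- Diffuseness relative to a sub-σ-algebra `m`. -/
def DiffuseOn {X : Type*} (m : MeasurableSpace X) {m0 : MeasurableSpace X}
    (μ : Measure X) : Prop :=
  ∀ A : Set X, MeasurableSet[m] A → μ A ≠ 0 →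
    ∃ B : Set X, MeasurableSet[m] B ∧ B ⊆ A ∧ 0 < μ B ∧ μ B < μ A
/-! Ultraproduct actions and weak containment between ordinary actions and actions
on the Loeb space, phrased via the Loeb outer measure. -/

/-- The ultraproduct action on the Loeb space of a sequence of actions `b n` of `G`:
`g · [x_n]_u = [b n g (x_n)]_u`. -/
def uAct (u : Ultrafilter ℕ) {G : Type*} {X : ℕ → Type*}
    (b : ∀ n, G → X n → X n) (g : G) : UProd u X → UProd u X :=
  uMap u fun n => b n g

/-- An (exact) finite partition of the Loeb space into Loeb measurable atoms. -/
def LoebPartition (u : Ultrafilter ℕ) {X : ℕ → Type*} [∀ n, MeasurableSpace (X n)]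
    (μ : ∀ n, Measure (X n)) {k : ℕ} (Q : Fin k → Set (UProd u X)) : Prop :=
  (∀ i, LoebMeasurable u μ (Q i)) ∧ Pairwise (Function.onFun Disjoint Q) ∧
    ⋃ i, Q i = Set.univ

/-- The `ℓ¹`-distance between the `F`-statistics of a partition `P` for an ordinary
pmp action `c` on `(Y, ν)` and of a partition `Q` of the Loeb space for the family of
maps `T : G → UProd u X → UProd u X` (e.g. an ultraproduct action). -/
noncomputable def statDistL (u : Ultrafilter ℕ) {G : Type*}
    {Y : Type*} [MeasurableSpace Y] (ν : Measure Y) (c : G → Y → Y)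
    {X : ℕ → Type*} [∀ n, MeasurableSpace (X n)] (μ : ∀ n, Measure (X n))
    (T : G → UProd u X → UProd u X)
    (F : Finset G) {k : ℕ} (P : Fin k → Set Y) (Q : Fin k → Set (UProd u X)) : ℝ :=
  ∑ i : Fin k, ∑ j : Fin k, ∑ f ∈ F,
    |(ν (P i ∩ actSet c f (P j))).toReal -
      (loebOuter u μ (Q i ∩ (T f '' Q j))).toReal|

/-- Weak containment of an ordinary pmp action `c` on `(Y, ν)` in an action `T` on the
Loeb space of `(X n, μ n)`. -/
def WCtoLoeb (u : Ultrafilter ℕ) {G : Type*}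
    {Y : Type*} [MeasurableSpace Y] (ν : Measure Y) (c : G → Y → Y)
    {X : ℕ → Type*} [∀ n, MeasurableSpace (X n)] (μ : ∀ n, Measure (X n))
    (T : G → UProd u X → UProd u X) : Prop :=
  ∀ ε : ℝ, 0 < ε → ∀ (F : Finset G) (k : ℕ) (P : Fin k → Set Y), IsPartition P →
    ∃ Q : Fin k → Set (UProd u X), LoebPartition u μ Q ∧
      statDistL u ν c μ T F P Q ≤ ε

/-- Weak containment of an action `T` on the Loeb space of `(X n, μ n)` in an ordinary
pmp action `c` on `(Y, ν)`. -/
def WCfromLoeb (u : Ultrafilter ℕ) {G : Type*}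
    {X : ℕ → Type*} [∀ n, MeasurableSpace (X n)] (μ : ∀ n, Measure (X n))
    (T : G → UProd u X → UProd u X)
    {Y : Type*} [MeasurableSpace Y] (ν : Measure Y) (c : G → Y → Y) : Prop :=
  ∀ ε : ℝ, 0 < ε → ∀ (F : Finset G) (k : ℕ) (Q : Fin k → Set (UProd u X)),
    LoebPartition u μ Q →
      ∃ P : Fin k → Set Y, IsPartition P ∧ statDistL u ν c μ T F P Q ≤ ε

/-- The action `c` of `G` on `(Y, ν)` is a factor of the action `T` of `G` on the Loeb
space of `(X n, μ n)`: there is a `G`-equivariant measure-preserving embedding `Φ` of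
measure algebras (all identities holding modulo null sets). -/
def IsFactorOfLoeb (u : Ultrafilter ℕ) {G : Type*}
    {Y : Type*} [MeasurableSpace Y] (ν : Measure Y) (c : G → Y → Y)
    {X : ℕ → Type*} [∀ n, MeasurableSpace (X n)] (μ : ∀ n, Measure (X n))
    (T : G → UProd u X → UProd u X) : Prop :=
  ∃ Φ : Set Y → Set (UProd u X),
    (∀ A : Set Y, MeasurableSet A → LoebMeasurable u μ (Φ A)) ∧
    (∀ A : Set Y, MeasurableSet A → loebOuter u μ (Φ A) = ν A) ∧
    (∀ A : Set Y, MeasurableSet A → loebOuter u μ (Φ Aᶜ ∆ (Φ A)ᶜ) = 0) ∧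
    (∀ A : ℕ → Set Y, (∀ i, MeasurableSet (A i)) →
      loebOuter u μ (Φ (⋃ i, A i) ∆ ⋃ i, Φ (A i)) = 0) ∧
    (∀ (g : G) (A : Set Y), MeasurableSet A →
      loebOuter u μ (Φ (actSet c g A) ∆ (T g '' Φ A)) = 0)
/-- `d_{F,Q}(a_u, c)` for a partition `Q` of the Loeb space: the infimum over `k`-atom
partitions `P` of `(Y, ν)` of the `ℓ¹`-distance of `F`-statistics. -/
noncomputable def dPartFromLoeb (u : Ultrafilter ℕ) {G : Type*}
    {X : ℕ → Type*} [∀ n, MeasurableSpace (X n)] (μ : ∀ n, Measure (X n))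
    (T : G → UProd u X → UProd u X) (F : Finset G) {k : ℕ}
    (Q : Fin k → Set (UProd u X))
    {Y : Type*} [MeasurableSpace Y] (ν : Measure Y) (c : G → Y → Y) : ℝ :=
  sInf {r : ℝ | ∃ P : Fin k → Set Y, IsPartition P ∧ r = statDistL u ν c μ T F P Q}

/-- `d_{F,P}(c, a_u)` for a partition `P` of `(Y, ν)`: the infimum over `k`-atom Loeb
partitions `Q` of the `ℓ¹`-distance of `F`-statistics. -/
noncomputable def dPartToLoeb (u : Ultrafilter ℕ) {G : Type*}
    {Y : Type*} [MeasurableSpace Y] (ν : Measure Y) (c : G → Y → Y)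
    {X : ℕ → Type*} [∀ n, MeasurableSpace (X n)] (μ : ∀ n, Measure (X n))
    (T : G → UProd u X → UProd u X) (F : Finset G) {k : ℕ} (P : Fin k → Set Y) : ℝ :=
  sInf {r : ℝ | ∃ Q : Fin k → Set (UProd u X), LoebPartition u μ Q ∧
    r = statDistL u ν c μ T F P Q}

/-- `d_{F,k}(c, a_u)`: the supremum over `k`-atom partitions `P` of `(Y, ν)` of
`d_{F,P}(c, a_u)`. -/
noncomputable def dNumToLoeb (u : Ultrafilter ℕ) {G : Type*}
    {Y : Type*} [MeasurableSpace Y] (ν : Measure Y) (c : G → Y → Y)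
    {X : ℕ → Type*} [∀ n, MeasurableSpace (X n)] (μ : ∀ n, Measure (X n))
    (T : G → UProd u X → UProd u X) (F : Finset G) (k : ℕ) : ℝ :=
  sSup {r : ℝ | ∃ P : Fin k → Set Y, IsPartition P ∧ r = dPartToLoeb u ν c μ T F P}

/-! ### Auxiliary lemmas: `ulim` -/

section Ulim

variable (u : Ultrafilter ℕ)

theorem ulim_spec (f : ℕ → ℝ≥0∞) : Tendsto f (u : Filter ℕ) (𝓝 (ulim u f)) := by
  have h := Ultrafilter.le_nhds_lim (u.map f)
  rwa [Ultrafilter.coe_map] at h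

theorem ulim_eq {f : ℕ → ℝ≥0∞} {a : ℝ≥0∞} (h : Tendsto f (u : Filter ℕ) (𝓝 a)) :
    ulim u f = a :=
  tendsto_nhds_unique (ulim_spec u f) h

theorem ulim_const (a : ℝ≥0∞) : ulim u (fun _ => a) = a :=
  ulim_eq u tendsto_const_nhds

theorem ulim_congr {f g : ℕ → ℝ≥0∞} (h : ∀ᶠ n in (u : Filter ℕ), f n = g n) :
    ulim u f = ulim u g :=
  ulim_eq u ((ulim_spec u g).congr' (h.mono fun _ e => e.symm))

theorem ulim_mono {f g : ℕ → ℝ≥0∞} (h : ∀ᶠ n in (u : Filter ℕ), f n ≤ g n) :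
    ulim u f ≤ ulim u g :=
  le_of_tendsto_of_tendsto (ulim_spec u f) (ulim_spec u g) h

theorem ulim_add (f g : ℕ → ℝ≥0∞) :
    ulim u (fun n => f n + g n) = ulim u f + ulim u g :=
  ulim_eq u ((ulim_spec u f).add (ulim_spec u g))

theorem ulim_le_const {f : ℕ → ℝ≥0∞} {a : ℝ≥0∞} (h : ∀ᶠ n in (u : Filter ℕ), f n ≤ a) :
    ulim u f ≤ a := by
  simpa [ulim_const] using ulim_mono u (g := fun _ => a) h

theorem const_le_ulim {f : ℕ → ℝ≥0∞} {a : ℝ≥0∞} (h : ∀ᶠ n in (u : Filter ℕ), a ≤ f n) :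
    a ≤ ulim u f := by
  simpa [ulim_const] using ulim_mono u (f := fun _ => a) h

theorem ulim_sum {ι : Type*} (s : Finset ι) (f : ι → ℕ → ℝ≥0∞) :
    ulim u (fun n => ∑ i ∈ s, f i n) = ∑ i ∈ s, ulim u (f i) :=
  ulim_eq u (tendsto_finset_sum s fun i _ => ulim_spec u (f i))

theorem ulim_eventually_ne_zero {f : ℕ → ℝ≥0∞} (h : ulim u f ≠ 0) :
    {n | f n ≠ 0} ∈ u := by
  by_contra hc
  have h0 : ∀ᶠ n in (u : Filter ℕ), f n = 0 := by
    have := (Ultrafilter.compl_mem_iff_notMem (s := {n | f n ≠ 0})).2 hc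
    filter_upwards [this] with n hn
    simpa using hn
  exact h (ulim_eq u ((tendsto_const_nhds).congr' (h0.mono fun _ e => e.symm)))

end Ulim

/-! ### Auxiliary lemmas: `uSet` algebra -/

section USet

variable (u : Ultrafilter ℕ) {X : ℕ → Type*}

theorem uRel_equivalence : Equivalence (uRel u (X := X)) :=
  ⟨fun _ => Eventually.of_forall fun _ => rfl,
   fun h => h.mono fun _ e => e.symm,
   fun h1 h2 => h2.mp (h1.mono fun _ a b => a.trans b)⟩

theorem uMk_eq_iff {x y : ∀ n, X n} : uMk u x = uMk u y ↔ uRel u x y := by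
  rw [uMk, uMk]
  change @Eq (Quot (uRel u (X := X))) (Quot.mk _ x) (Quot.mk _ y) ↔ _
  rw [Quot.eq]
  exact Equivalence.eqvGen_iff (uRel_equivalence u)

theorem uProd_ind {p : UProd u X → Prop} (h : ∀ x, p (uMk u x)) : ∀ z, p z :=
  Quot.ind h

theorem mem_uSet_iff {A : ∀ n, Set (X n)} {x : ∀ n, X n} :
    uMk u x ∈ uSet u A ↔ ∀ᶠ n in (u : Filter ℕ), x n ∈ A n := by
  constructor
  · rintro ⟨y, hy, hmem⟩
    have : uRel u y x := (uMk_eq_iff u).1 hy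
    filter_upwards [hmem, this] with n h1 h2
    rwa [h2] at h1
  · intro h
    exact ⟨x, rfl, h⟩

theorem uSet_inter (A B : ∀ n, Set (X n)) :
    uSet u (fun n => A n ∩ B n) = uSet u A ∩ uSet u B := by
  ext z
  induction z using uProd_ind u with | h x =>
  simp only [Set.mem_inter_iff, mem_uSet_iff]
  constructor
  · exact fun h => ⟨h.mono fun n hn => hn.1, h.mono fun n hn => hn.2⟩
  · exact fun ⟨h1, h2⟩ => h1.and h2

theorem uSet_compl (A : ∀ n, Set (X n)) :
    uSet u (fun n => (A n)ᶜ) = (uSet u A)ᶜ := by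
  ext z
  induction z using uProd_ind u with | h x =>
  simp only [Set.mem_compl_iff, mem_uSet_iff]
  exact Ultrafilter.eventually_not

theorem uSet_mono {A B : ∀ n, Set (X n)} (h : ∀ᶠ n in (u : Filter ℕ), A n ⊆ B n) :
    uSet u A ⊆ uSet u B := by
  intro z
  induction z using uProd_ind u with | h x =>
  simp only [mem_uSet_iff]
  intro hx
  filter_upwards [hx, h] with n h1 h2 using h2 h1

theorem uSet_congr {A B : ∀ n, Set (X n)} (h : ∀ᶠ n in (u : Filter ℕ), A n = B n) :
    uSet u A = uSet u B :=
  Set.Subset.antisymm (uSet_mono u (h.mono fun _ e => e.le))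
    (uSet_mono u (h.mono fun _ e => e.ge))

theorem uSet_univ : uSet u (fun n => (Set.univ : Set (X n))) = Set.univ := by
  ext z
  induction z using uProd_ind u with | h x =>
  simp [mem_uSet_iff]

theorem uSet_empty : uSet u (fun n => (∅ : Set (X n))) = ∅ := by
  ext z
  induction z using uProd_ind u with | h x =>
  simp only [mem_uSet_iff, Set.mem_empty_iff_false, iff_false]
  intro h
  exact (Ultrafilter.neBot u).ne (eventually_false_iff_eq_bot.1 h)

theorem uSet_union (A B : ∀ n, Set (X n)) :
    uSet u (fun n => A n ∪ B n) = uSet u A ∪ uSet u B := by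
  have := uSet_inter u (fun n => (A n)ᶜ) (fun n => (B n)ᶜ)
  rw [uSet_compl, uSet_compl] at this
  have h2 : uSet u (fun n => A n ∪ B n)
      = uSet u (fun n => (((A n)ᶜ ∩ (B n)ᶜ))ᶜ) := by
    apply uSet_congr
    exact Eventually.of_forall fun n => by simp [Set.compl_inter]
  rw [h2, uSet_compl, this, Set.compl_inter, compl_compl, compl_compl]

theorem uSet_diff (A B : ∀ n, Set (X n)) :
    uSet u (fun n => A n \ B n) = uSet u A \ uSet u B := by
  have h : uSet u (fun n => A n \ B n) = uSet u (fun n => A n ∩ (B n)ᶜ) := rfl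
  rw [h, uSet_inter, uSet_compl]; rfl

theorem uSet_symmDiff (A B : ∀ n, Set (X n)) :
    uSet u (fun n => A n ∆ B n) = uSet u A ∆ uSet u B := by
  have h : (fun n => A n ∆ B n) = fun n => (A n \ B n) ∪ (B n \ A n) :=
    funext fun n => Set.symmDiff_def (A n) (B n)
  rw [h, uSet_union, uSet_diff, uSet_diff, ← Set.symmDiff_def]

theorem uSet_iUnion_fin {k : ℕ} (A : Fin k → ∀ n, Set (X n)) :
    uSet u (fun n => ⋃ i, A i n) = ⋃ i, uSet u (A i) := by
  ext z
  induction z using uProd_ind u with | h x =>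
  simp only [mem_uSet_iff, Set.mem_iUnion]
  constructor
  · intro h
    have hmem : (⋃ i ∈ (Set.univ : Set (Fin k)), {n | x n ∈ A i n}) ∈ u := by
      apply Filter.mem_of_superset h
      intro n hn
      obtain ⟨i, hi⟩ := (hn : ∃ i, x n ∈ A i n)
      exact Set.mem_biUnion (Set.mem_univ i) (show n ∈ {m | x m ∈ A i m} from hi)
    obtain ⟨i, _, hi⟩ := (Ultrafilter.finite_biUnion_mem_iff Set.finite_univ).1 hmem
    exact ⟨i, hi⟩
  · rintro ⟨i, hi⟩
    filter_upwards [hi] with n hn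
    exact ⟨i, hn⟩

end USet
/-! ### Auxiliary lemmas: `uMap`, `uAct`, actions -/

section UMap

variable (u : Ultrafilter ℕ) {X : ℕ → Type*}

theorem uMap_uMk (g : ∀ n, X n → X n) (x : ∀ n, X n) :
    uMap u g (uMk u x) = uMk u (fun n => g n (x n)) := rfl

theorem uMap_image_uSet (g : ∀ n, X n → X n) (hg : ∀ n, Function.Bijective (g n))
    (A : ∀ n, Set (X n)) :
    uMap u g '' uSet u A = uSet u (fun n => g n '' A n) := by
  ext z
  constructor
  · rintro ⟨w, hw, rfl⟩
    induction w using uProd_ind u with | h x =>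
    rw [mem_uSet_iff] at hw
    rw [uMap_uMk, mem_uSet_iff]
    filter_upwards [hw] with n hn
    exact ⟨x n, hn, rfl⟩
  · intro hz
    induction z using uProd_ind u with | h y =>
    rw [mem_uSet_iff] at hz
    set x : ∀ n, X n := fun n => Function.surjInv (hg n).2 (y n) with hx
    have hgx : ∀ n, g n (x n) = y n := fun n => Function.surjInv_eq (hg n).2 (y n)
    refine ⟨uMk u x, ?_, ?_⟩
    · rw [mem_uSet_iff]
      filter_upwards [hz] with n hn
      obtain ⟨a, ha, hay⟩ := hn
      have : a = x n := (hg n).1 (by rw [hgx]; exact hay)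
      rwa [← this]
    · rw [uMap_uMk]
      exact congrArg (uMk u) (funext fun n => hgx n)

end UMap

section Action

variable {G : Type*} [Group G]

theorem IsPMP.bijective {X : Type*} [MeasurableSpace X] {μ : Measure X}
    {a : G → X → X} (h : IsPMP μ a) (g : G) : Function.Bijective (a g) := by
  refine Function.bijective_iff_has_inverse.2 ⟨a g⁻¹, fun x => ?_, fun x => ?_⟩
  · rw [← h.2.2, inv_mul_cancel, h.2.1]
  · rw [← h.2.2, mul_inv_cancel, h.2.1]

theorem actSet_eq_preimage {X : Type*} [MeasurableSpace X] {μ : Measure X}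
    {a : G → X → X} (h : IsPMP μ a) (g : G) (S : Set X) :
    actSet a g S = (a g⁻¹) ⁻¹' S := by
  ext x
  simp only [actSet, Set.mem_image, Set.mem_preimage]
  constructor
  · rintro ⟨y, hy, rfl⟩
    have : a g⁻¹ (a g y) = y := by rw [← h.2.2, inv_mul_cancel, h.2.1]
    rwa [this]
  · intro hx
    refine ⟨a g⁻¹ x, hx, ?_⟩
    rw [← h.2.2, mul_inv_cancel, h.2.1]

theorem actSet_measurableSet {X : Type*} [MeasurableSpace X] {μ : Measure X}
    {a : G → X → X} (h : IsPMP μ a) (g : G) {S : Set X} (hS : MeasurableSet S) :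
    MeasurableSet (actSet a g S) := by
  rw [actSet_eq_preimage h]
  exact (h.1 g⁻¹).measurable hS

theorem measure_actSet {X : Type*} [MeasurableSpace X] {μ : Measure X}
    {a : G → X → X} (h : IsPMP μ a) (g : G) {S : Set X} (hS : MeasurableSet S) :
    μ (actSet a g S) = μ S := by
  rw [actSet_eq_preimage h]
  exact (h.1 g⁻¹).measure_preimage hS.nullMeasurableSet

theorem uAct_image_uSet (u : Ultrafilter ℕ) {X : ℕ → Type*}
    [∀ n, MeasurableSpace (X n)] {μ : ∀ n, Measure (X n)}
    {b : ∀ n, G → X n → X n} (hb : ∀ n, IsPMP (μ n) (b n)) (g : G)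
    (A : ∀ n, Set (X n)) :
    uAct u b g '' uSet u A = uSet u (fun n => actSet (b n) g (A n)) :=
  uMap_image_uSet u (fun n => b n g) (fun n => (hb n).bijective g) A

end Action
/-! ### Auxiliary lemmas: the Loeb outer measure -/

section Loeb

variable (u : Ultrafilter ℕ) {X : ℕ → Type*} [∀ n, MeasurableSpace (X n)]
variable (μ : ∀ n, Measure (X n))

theorem nonempty_of_prob {Y : Type*} [MeasurableSpace Y] (ν : Measure Y)
    [IsProbabilityMeasure ν] : Nonempty Y := by
  by_contra h
  rw [not_nonempty_iff] at h
  have h1 : ν Set.univ = 1 := measure_univ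
  rw [Set.univ_eq_empty_iff.2 h, measure_empty] at h1
  exact zero_ne_one h1

theorem loebOuter_le {A : Set (UProd u X)} (B : ℕ → ∀ n, Set (X n))
    (hB : ∀ i n, MeasurableSet (B i n)) (hcov : A ⊆ ⋃ i, uSet u (B i)) :
    loebOuter u μ A ≤ ∑' i, ulim u fun n => μ n (B i n) :=
  iInf₂_le B ⟨hB, hcov⟩

theorem loebOuter_mono {A A' : Set (UProd u X)} (h : A ⊆ A') :
    loebOuter u μ A ≤ loebOuter u μ A' := by
  refine le_iInf₂ fun B hB => ?_
  exact loebOuter_le u μ B hB.1 (h.trans hB.2)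

theorem loebOuter_empty : loebOuter u μ (∅ : Set (UProd u X)) = 0 := by
  refine le_antisymm ?_ zero_le
  have h := loebOuter_le u μ (A := (∅ : Set (UProd u X))) (fun _ n => (∅ : Set (X n)))
    (fun _ n => MeasurableSet.empty) (Set.empty_subset _)
  calc loebOuter u μ (∅ : Set (UProd u X)) ≤ ∑' _i : ℕ, ulim u fun n => μ n (∅ : Set (X n)) := h
    _ = 0 := by simp [ulim_const]

/-- The saturation property: internal sets cannot be covered more cheaply. -/
theorem ulim_le_tsum_of_cover (hu : (u : Filter ℕ) ≤ Filter.cofinite)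
    [∀ n, IsProbabilityMeasure (μ n)]
    (B : ∀ n, Set (X n)) (C : ℕ → ∀ n, Set (X n))
    (hcov : uSet u B ⊆ ⋃ i, uSet u (C i)) :
    ulim u (fun n => μ n (B n)) ≤ ∑' i, ulim u (fun n => μ n (C i n)) := by
  classical
  by_contra hlt
  push_neg at hlt
  set L := ulim u fun n => μ n (B n) with hL
  set S := ∑' i, ulim u fun n => μ n (C i n) with hS
  have hL1 : L ≤ 1 := ulim_le_const u (Eventually.of_forall fun n => prob_le_one)
  have hSfin : S ≠ ∞ := (hlt.trans_le hL1).trans_le le_top |>.ne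
  set ε := L - S with hε
  have hεpos : 0 < ε := tsub_pos_of_lt hlt
  have hLS : S + ε = L := add_tsub_cancel_of_le hlt.le
  set A : ℕ → ∀ n, Set (X n) := fun m n => B n \ ⋃ i ∈ Finset.range m, C i n with hA
  have hA_anti : ∀ {m m'}, m ≤ m' → ∀ n, A m' n ⊆ A m n := by
    intro m m' hmm n
    apply Set.diff_subset_diff_right
    intro t ht
    simp only [Set.mem_iUnion] at ht ⊢
    obtain ⟨i, hi, hti⟩ := ht
    exact ⟨i, Finset.mem_range.2 ((Finset.mem_range.1 hi).trans_le hmm), hti⟩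
  have step1 : ∀ m, ε ≤ ulim u fun n => μ n (A m n) := by
    intro m
    have hpt : ∀ n, μ n (B n) ≤ μ n (A m n) + ∑ i ∈ Finset.range m, μ n (C i n) := by
      intro n
      have hsub : B n ⊆ A m n ∪ ⋃ i ∈ Finset.range m, C i n := by
        intro t ht
        by_cases h : t ∈ ⋃ i ∈ Finset.range m, C i n
        · exact Or.inr h
        · exact Or.inl ⟨ht, h⟩
      calc μ n (B n) ≤ μ n (A m n ∪ ⋃ i ∈ Finset.range m, C i n) := measure_mono hsub
        _ ≤ μ n (A m n) + μ n (⋃ i ∈ Finset.range m, C i n) := measure_union_le _ _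
        _ ≤ μ n (A m n) + ∑ i ∈ Finset.range m, μ n (C i n) := by
            gcongr
            exact measure_biUnion_finset_le _ _
    have h1 : L ≤ ulim u (fun n => μ n (A m n)) + ∑ i ∈ Finset.range m, ulim u (fun n => μ n (C i n)) := by
      calc L ≤ ulim u (fun n => μ n (A m n) + ∑ i ∈ Finset.range m, μ n (C i n)) :=
            ulim_mono u (Eventually.of_forall hpt)
        _ = _ := by rw [ulim_add]; congr 1; exact ulim_sum u _ _
    have h2 : (∑ i ∈ Finset.range m, ulim u (fun n => μ n (C i n))) ≤ S :=
      ENNReal.sum_le_tsum _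
    have h3 : L ≤ ulim u (fun n => μ n (A m n)) + S := h1.trans (by gcongr)
    rw [hε]
    exact tsub_le_iff_right.2 h3
  have step2 : ∀ m, {n | (A m n).Nonempty} ∈ u := by
    intro m
    by_contra hc
    have hcompl : {n | ¬ (A m n).Nonempty} ∈ u :=
      (Ultrafilter.compl_mem_iff_notMem (s := {n | (A m n).Nonempty})).2 hc
    have h0 : ∀ᶠ n in (u : Filter ℕ), μ n (A m n) = 0 := by
      filter_upwards [hcompl] with n hn
      rw [Set.not_nonempty_iff_eq_empty] at hn
      rw [hn, measure_empty]
    have := step1 m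
    rw [ulim_congr u h0, ulim_const] at this
    exact hεpos.ne' (le_antisymm this zero_le)
  -- diagonal sequence
  have hne : ∀ n, Nonempty (X n) := fun n => nonempty_of_prob (μ n)
  set g : ℕ → ℕ := fun n => Nat.findGreatest (fun m => (A m n).Nonempty) n with hg
  set x : ∀ n, X n := fun n =>
    if h : (A (g n) n).Nonempty then h.choose else (hne n).some with hxdef
  have hx : ∀ m, ∀ᶠ n in (u : Filter ℕ), x n ∈ A m n := by
    intro m
    have hge : {n | m ≤ n} ∈ u := by
      apply hu
      rw [Filter.mem_cofinite]
      have : {n | m ≤ n}ᶜ ⊆ Set.Iio m := by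
        intro n hn
        simpa [Set.mem_Iio] using hn
      exact (Set.finite_Iio m).subset this
    filter_upwards [step2 m, hge] with n h1 h2
    have hgn : m ≤ g n := Nat.le_findGreatest h2 h1
    have hPg : (A (g n) n).Nonempty :=
      Nat.findGreatest_spec (P := fun m => (A m n).Nonempty) h2 h1
    have hxn : x n ∈ A (g n) n := by
      rw [hxdef]
      simp only [hPg, dif_pos]
      exact hPg.choose_spec
    exact hA_anti hgn n hxn
  have hxB : uMk u x ∈ uSet u B := by
    rw [mem_uSet_iff]
    filter_upwards [hx 0] with n hn
    exact hn.1
  obtain ⟨W, ⟨i, rfl⟩, hiW⟩ := hcov hxB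
  rw [mem_uSet_iff] at hiW
  have hxnotC : ∀ᶠ n in (u : Filter ℕ), x n ∉ C i n := by
    filter_upwards [hx (i + 1)] with n hn
    intro hmem
    apply hn.2
    simp only [Set.mem_iUnion]
    exact ⟨i, Finset.mem_range.2 (Nat.lt_succ_self i), hmem⟩
  have : ∀ᶠ n in (u : Filter ℕ), False := by
    filter_upwards [hiW, hxnotC] with n h1 h2
    exact h2 h1
  exact (Ultrafilter.neBot u).ne (eventually_false_iff_eq_bot.1 this)

/-- The Loeb outer measure of an internal set is the ultralimit of the measures. -/
theorem loebOuter_uSet (hu : (u : Filter ℕ) ≤ Filter.cofinite)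
    [∀ n, IsProbabilityMeasure (μ n)]
    (B : ∀ n, Set (X n)) (hB : ∀ n, MeasurableSet (B n)) :
    loebOuter u μ (uSet u B) = ulim u fun n => μ n (B n) := by
  classical
  refine le_antisymm ?_ ?_
  · have h := loebOuter_le u μ (fun i => if i = 0 then B else fun n => (∅ : Set (X n)))
      (fun i n => by by_cases h : i = 0 <;> simp [h, hB n])
      (by
        intro z hz
        exact Set.mem_iUnion.2 ⟨0, by simpa using hz⟩)
    refine h.trans_eq ?_
    rw [tsum_eq_single 0 ?_]
    · simp
    · intro i hi
      simp [hi, ulim_const]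
  · refine le_iInf₂ fun C hC => ?_
    exact ulim_le_tsum_of_cover u μ hu B C hC.2

theorem loebOuter_univ (hu : (u : Filter ℕ) ≤ Filter.cofinite)
    [∀ n, IsProbabilityMeasure (μ n)] :
    loebOuter u μ (Set.univ : Set (UProd u X)) = 1 := by
  have h := loebOuter_uSet u μ hu (fun n => Set.univ) (fun n => MeasurableSet.univ)
  rw [uSet_univ] at h
  rw [h]
  simpa using ulim_const u 1

theorem loebOuter_le_one (hu : (u : Filter ℕ) ≤ Filter.cofinite)
    [∀ n, IsProbabilityMeasure (μ n)] (A : Set (UProd u X)) :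
    loebOuter u μ A ≤ 1 := by
  rw [← loebOuter_univ u μ hu]
  exact loebOuter_mono u μ (Set.subset_univ A)

theorem loebOuter_ne_top (hu : (u : Filter ℕ) ≤ Filter.cofinite)
    [∀ n, IsProbabilityMeasure (μ n)] (A : Set (UProd u X)) :
    loebOuter u μ A ≠ ∞ :=
  ((loebOuter_le_one u μ hu A).trans_lt ENNReal.one_lt_top).ne

/-- Extraction of near-optimal covers. -/
theorem exists_cover_lt {A : Set (UProd u X)} {t : ℝ≥0∞} (ht : loebOuter u μ A < t) :
    ∃ B : ℕ → ∀ n, Set (X n), (∀ i n, MeasurableSet (B i n)) ∧ (A ⊆ ⋃ i, uSet u (B i)) ∧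
      (∑' i, ulim u fun n => μ n (B i n)) < t := by
  rw [loebOuter, iInf_lt_iff] at ht
  obtain ⟨B, hB⟩ := ht
  rw [iInf_lt_iff] at hB
  obtain ⟨hBp, hlt⟩ := hB
  exact ⟨B, hBp.1, hBp.2, hlt⟩

theorem loebOuter_union_le (A A' : Set (UProd u X)) :
    loebOuter u μ (A ∪ A') ≤ loebOuter u μ A + loebOuter u μ A' := by
  classical
  rcases eq_top_or_lt_top (loebOuter u μ A) with h | h
  · rw [h]; simp [top_add]
  rcases eq_top_or_lt_top (loebOuter u μ A') with h' | h'
  · rw [h']; simp [add_top]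
  refine ENNReal.le_of_forall_pos_le_add fun δ hδ _ => ?_
  have hδ2 : (0 : ℝ≥0∞) < δ / 2 := by
    simp [ENNReal.div_pos_iff, hδ.ne']
  obtain ⟨B, hBm, hBc, hBs⟩ := exists_cover_lt u μ (A := A)
    (t := loebOuter u μ A + δ / 2) (by
      exact ENNReal.lt_add_right h.ne hδ2.ne')
  obtain ⟨C, hCm, hCc, hCs⟩ := exists_cover_lt u μ (A := A')
    (t := loebOuter u μ A' + δ / 2) (by
      exact ENNReal.lt_add_right h'.ne hδ2.ne')
  set D : ℕ → ∀ n, Set (X n) := fun i => if Even i then B (i / 2) else C (i / 2) with hD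
  have hDm : ∀ i n, MeasurableSet (D i n) := by
    intro i n
    by_cases h : Even i <;> simp [hD, h, hBm _ n, hCm _ n]
  have hDc : A ∪ A' ⊆ ⋃ i, uSet u (D i) := by
    rintro z (hz | hz)
    · obtain ⟨W, ⟨i, rfl⟩, hiW⟩ := hBc hz
      refine Set.mem_iUnion.2 ⟨2 * i, ?_⟩
      have : D (2 * i) = B i := by simp [hD, Nat.mul_div_cancel_left i (by norm_num : 0 < 2)]
      rw [this]; exact hiW
    · obtain ⟨W, ⟨i, rfl⟩, hiW⟩ := hCc hz
      refine Set.mem_iUnion.2 ⟨2 * i + 1, ?_⟩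
      have hodd : ¬ Even (2 * i + 1) := by simp [Nat.even_add_one, Nat.even_mul]
      have hdiv : (2 * i + 1) / 2 = i := by omega
      have : D (2 * i + 1) = C i := by
        simp only [hD, hodd, if_false, hdiv]
      rw [this]; exact hiW
  have hsum : (∑' i, ulim u fun n => μ n (D i n))
      = (∑' i, ulim u fun n => μ n (B i n)) + ∑' i, ulim u fun n => μ n (C i n) := by
    rw [← tsum_even_add_odd ENNReal.summable ENNReal.summable]
    congr 1
    · apply tsum_congr; intro i
      congr 1
      ext n
      simp [hD, Nat.mul_div_cancel_left i (by norm_num : 0 < 2)]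
    · apply tsum_congr; intro i
      have hodd : ¬ Even (2 * i + 1) := by simp [Nat.even_add_one, Nat.even_mul]
      have hdiv : (2 * i + 1) / 2 = i := by omega
      congr 1
      ext n
      simp only [hD, hodd, if_false, hdiv]
  calc loebOuter u μ (A ∪ A') ≤ ∑' i, ulim u fun n => μ n (D i n) :=
        loebOuter_le u μ D hDm hDc
    _ = _ := hsum
    _ ≤ (loebOuter u μ A + δ / 2) + (loebOuter u μ A' + δ / 2) :=
        add_le_add hBs.le hCs.le
    _ = loebOuter u μ A + loebOuter u μ A' + ((δ : ℝ≥0∞) / 2 + (δ : ℝ≥0∞) / 2) := by ring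
    _ = loebOuter u μ A + loebOuter u μ A' + δ := by rw [ENNReal.add_halves]

end Loeb
/-! ### Caratheodory measurability of internal sets, symmetric difference estimates -/

section Loeb2

variable (u : Ultrafilter ℕ) {X : ℕ → Type*} [∀ n, MeasurableSpace (X n)]
variable (μ : ∀ n, Measure (X n))

theorem loebMeasurable_uSet (A : ∀ n, Set (X n)) (hA : ∀ n, MeasurableSet (A n)) :
    LoebMeasurable u μ (uSet u A) := by
  intro S
  refine ENNReal.le_of_forall_pos_le_add fun δ hδ hfin => ?_
  have hδ' : (0 : ℝ≥0∞) < δ := by exact_mod_cast hδ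
  obtain ⟨B, hBm, hBc, hBs⟩ := exists_cover_lt u μ (A := S)
    (t := loebOuter u μ S + δ) (ENNReal.lt_add_right hfin.ne hδ'.ne')
  have h1 : loebOuter u μ (S ∩ uSet u A) ≤ ∑' i, ulim u fun n => μ n (B i n ∩ A n) := by
    refine loebOuter_le u μ _ (fun i n => (hBm i n).inter (hA n)) ?_
    intro z hz
    obtain ⟨W, ⟨i, rfl⟩, hiW⟩ := hBc hz.1
    refine Set.mem_iUnion.2 ⟨i, ?_⟩
    rw [uSet_inter]
    exact ⟨hiW, hz.2⟩
  have h2 : loebOuter u μ (S \ uSet u A) ≤ ∑' i, ulim u fun n => μ n (B i n \ A n) := by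
    refine loebOuter_le u μ _ (fun i n => (hBm i n).diff (hA n)) ?_
    intro z hz
    obtain ⟨W, ⟨i, rfl⟩, hiW⟩ := hBc hz.1
    refine Set.mem_iUnion.2 ⟨i, ?_⟩
    rw [uSet_diff]
    exact ⟨hiW, hz.2⟩
  calc loebOuter u μ (S ∩ uSet u A) + loebOuter u μ (S \ uSet u A)
      ≤ (∑' i, ulim u fun n => μ n (B i n ∩ A n)) + ∑' i, ulim u fun n => μ n (B i n \ A n) :=
        add_le_add h1 h2
    _ = ∑' i, (ulim u (fun n => μ n (B i n ∩ A n)) + ulim u (fun n => μ n (B i n \ A n))) :=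
        ENNReal.tsum_add.symm
    _ = ∑' i, ulim u (fun n => μ n (B i n)) := by
        refine tsum_congr fun i => ?_
        rw [← ulim_add]
        exact ulim_congr u (Eventually.of_forall fun n => measure_inter_add_diff _ (hA n))
    _ ≤ loebOuter u μ S + δ := hBs.le

theorem loebOuter_le_add_symmDiff (A B : Set (UProd u X)) :
    loebOuter u μ A ≤ loebOuter u μ B + loebOuter u μ (A ∆ B) := by
  have h : A ⊆ B ∪ (A ∆ B) := by
    intro x hx
    by_cases hB : x ∈ B
    · exact Or.inl hB
    · exact Or.inr (Set.mem_symmDiff.2 (Or.inl ⟨hx, hB⟩))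
  exact (loebOuter_mono u μ h).trans (loebOuter_union_le u μ _ _)

theorem loebOuter_symmDiff_le (A B : Set (UProd u X)) :
    loebOuter u μ (A ∆ B) ≤ loebOuter u μ (A \ B) + loebOuter u μ (B \ A) := by
  rw [Set.symmDiff_def]
  exact loebOuter_union_le u μ _ _

theorem symmDiff_inter_subset {α : Type*} (A A' B B' : Set α) :
    (A ∩ A') ∆ (B ∩ B') ⊆ (A ∆ B) ∪ (A' ∆ B') := by
  intro x hx
  rw [Set.mem_symmDiff] at hx
  rcases hx with ⟨⟨hA, hA'⟩, hn⟩ | ⟨⟨hB, hB'⟩, hn⟩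
  · by_cases hB : x ∈ B
    · have hB' : x ∉ B' := fun h => hn ⟨hB, h⟩
      exact Or.inr (Set.mem_symmDiff.2 (Or.inl ⟨hA', hB'⟩))
    · exact Or.inl (Set.mem_symmDiff.2 (Or.inl ⟨hA, hB⟩))
  · by_cases hA : x ∈ A
    · have hA' : x ∉ A' := fun h => hn ⟨hA, h⟩
      exact Or.inr (Set.mem_symmDiff.2 (Or.inr ⟨hB', hA'⟩))
    · exact Or.inl (Set.mem_symmDiff.2 (Or.inr ⟨hB, hA⟩))

theorem iUnion_symmDiff_subset {α ι : Type*} (A B : ι → Set α) :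
    (⋃ i, A i) ∆ (⋃ i, B i) ⊆ ⋃ i, (A i ∆ B i) := by
  intro x hx
  rw [Set.mem_symmDiff] at hx
  rcases hx with ⟨hA, hB⟩ | ⟨hB, hA⟩
  · obtain ⟨i, hi⟩ := Set.mem_iUnion.1 hA
    have : x ∉ B i := fun h => hB (Set.mem_iUnion.2 ⟨i, h⟩)
    exact Set.mem_iUnion.2 ⟨i, Set.mem_symmDiff.2 (Or.inl ⟨hi, this⟩)⟩
  · obtain ⟨i, hi⟩ := Set.mem_iUnion.1 hB
    have : x ∉ A i := fun h => hA (Set.mem_iUnion.2 ⟨i, h⟩)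
    exact Set.mem_iUnion.2 ⟨i, Set.mem_symmDiff.2 (Or.inr ⟨hi, this⟩)⟩

theorem uMap_injective {g : ∀ n, X n → X n} (hg : ∀ n, Function.Injective (g n)) :
    Function.Injective (uMap u g) := by
  intro z w h
  induction z using uProd_ind u with | h x =>
  induction w using uProd_ind u with | h y =>
  rw [uMap_uMk, uMap_uMk, uMk_eq_iff] at h
  rw [uMk_eq_iff]
  exact h.mono fun n hn => hg n hn

theorem loebOuter_uAct_image_le {G : Type*} [Group G]
    (hu : (u : Filter ℕ) ≤ Filter.cofinite) [∀ n, IsProbabilityMeasure (μ n)]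
    {b : ∀ n, G → X n → X n} (hb : ∀ n, IsPMP (μ n) (b n)) (f : G) (Z : Set (UProd u X)) :
    loebOuter u μ (uAct u b f '' Z) ≤ loebOuter u μ Z := by
  refine le_iInf₂ fun B hB => ?_
  have h := loebOuter_le u μ (A := uAct u b f '' Z)
    (fun i n => actSet (b n) f (B i n))
    (fun i n => actSet_measurableSet (hb n) f (hB.1 i n))
    (by
      intro z hz
      obtain ⟨w, hw, rfl⟩ := hz
      obtain ⟨W, ⟨i, rfl⟩, hiW⟩ := hB.2 hw
      refine Set.mem_iUnion.2 ⟨i, ?_⟩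
      rw [← uAct_image_uSet u hb f (B i)]
      exact ⟨w, hiW, rfl⟩)
  refine h.trans_eq (tsum_congr fun i => ?_)
  exact ulim_congr u (Eventually.of_forall fun n => measure_actSet (hb n) f (hB.1 i n))

theorem loebOuter_image_symmDiff_le {G : Type*} [Group G]
    (hu : (u : Filter ℕ) ≤ Filter.cofinite) [∀ n, IsProbabilityMeasure (μ n)]
    {b : ∀ n, G → X n → X n} (hb : ∀ n, IsPMP (μ n) (b n)) (f : G) (A B : Set (UProd u X)) :
    loebOuter u μ ((uAct u b f '' A) ∆ (uAct u b f '' B)) ≤ loebOuter u μ (A ∆ B) := by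
  have hinj : Function.Injective (uAct u b f) :=
    uMap_injective u (fun n => ((hb n).bijective f).1)
  rw [← Set.image_symmDiff hinj]
  exact loebOuter_uAct_image_le u μ hu hb f _

theorem abs_toReal_sub_le {a b c : ℝ≥0∞} (ha : a ≠ ∞) (hb : b ≠ ∞) (hc : c ≠ ∞)
    (h1 : a ≤ b + c) (h2 : b ≤ a + c) : |a.toReal - b.toReal| ≤ c.toReal := by
  rw [abs_sub_le_iff]
  constructor
  · have := ENNReal.toReal_mono (by simp [hb, hc] : b + c ≠ ∞) h1
    rw [ENNReal.toReal_add hb hc] at this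
    linarith
  · have := ENNReal.toReal_mono (by simp [ha, hc] : a + c ≠ ∞) h2
    rw [ENNReal.toReal_add ha hc] at this
    linarith

end Loeb2
/-! ### Internal approximation of Loeb measurable sets -/

section Loeb3

set_option linter.unusedSectionVars false

variable (u : Ultrafilter ℕ) {X : ℕ → Type*} [∀ n, MeasurableSpace (X n)]
variable (μ : ∀ n, Measure (X n))

theorem uSet_biUnion_range (C : ℕ → ∀ n, Set (X n)) (m : ℕ) :
    uSet u (fun n => ⋃ i ∈ Finset.range m, C i n) = ⋃ i ∈ Finset.range m, uSet u (C i) := by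
  induction m with
  | zero =>
      simp only [Finset.range_zero]
      have : (fun n => ⋃ i ∈ (∅ : Finset ℕ), C i n) = fun n => (∅ : Set (X n)) := by
        funext n; simp
      rw [this, uSet_empty]
      simp
  | succ m ih =>
      have h1 : (fun n => ⋃ i ∈ Finset.range (m + 1), C i n)
          = fun n => (⋃ i ∈ Finset.range m, C i n) ∪ C m n := by
        funext n
        rw [Finset.range_add_one]
        simp [Set.biUnion_insert, Set.union_comm]
      rw [h1, uSet_union, ih, Finset.range_add_one]
      simp [Set.biUnion_insert, Set.union_comm]

theorem exists_internal_approx (hu : (u : Filter ℕ) ≤ Filter.cofinite)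
    [∀ n, IsProbabilityMeasure (μ n)] {Q : Set (UProd u X)}
    (hQ : LoebMeasurable u μ Q) {δ : ℝ≥0∞} (hδ : 0 < δ) (hδfin : δ ≠ ∞) :
    ∃ B : ∀ n, Set (X n), (∀ n, MeasurableSet (B n)) ∧
      loebOuter u μ (Q ∆ uSet u B) ≤ δ := by
  classical
  have hQfin : loebOuter u μ Q ≠ ∞ := loebOuter_ne_top u μ hu Q
  have hδ2 : (0 : ℝ≥0∞) < δ / 2 := ENNReal.div_pos hδ.ne' (by norm_num)
  obtain ⟨C, hCm, hCc, hCs⟩ := exists_cover_lt u μ (A := Q)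
    (t := loebOuter u μ Q + δ / 2) (ENNReal.lt_add_right hQfin hδ2.ne')
  set t := ∑' i, ulim u fun n => μ n (C i n) with ht
  have htfin : t ≠ ∞ := (hCs.trans_le le_top).ne
  -- choose a tail index
  obtain ⟨m, hm⟩ : ∃ m, (∑' i, ulim u fun n => μ n (C (i + m) n)) ≤ δ / 2 := by
    have htail := ENNReal.tendsto_sum_nat_add (fun i => ulim u fun n => μ n (C i n)) htfin
    obtain ⟨m, hm⟩ := (htail.eventually_lt_const hδ2).exists
    exact ⟨m, by simpa [add_comm] using hm.le⟩
  set B : ∀ n, Set (X n) := fun n => ⋃ i ∈ Finset.range m, C i n with hB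
  have hBm : ∀ n, MeasurableSet (B n) := fun n =>
    Finset.measurableSet_biUnion _ (fun i _ => hCm i n)
  have hBU : uSet u B = ⋃ i ∈ Finset.range m, uSet u (C i) := uSet_biUnion_range u C m
  set W : Set (UProd u X) := ⋃ i, uSet u (C i) with hW
  have hQW : Q ⊆ W := hCc
  have hBW : uSet u B ⊆ W := by
    rw [hBU]
    exact Set.iUnion₂_subset fun i _ => Set.subset_iUnion (fun j => uSet u (C j)) i
  refine ⟨B, hBm, ?_⟩
  have hdiff1 : loebOuter u μ (Q \ uSet u B) ≤ δ / 2 := by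
    have hsub : Q \ uSet u B ⊆ ⋃ i, uSet u (C (i + m)) := by
      intro z hz
      obtain ⟨V, ⟨i, rfl⟩, hiV⟩ := hCc hz.1
      rcases lt_or_ge i m with him | him
      · exact absurd (by rw [hBU]; exact Set.mem_biUnion (Finset.mem_range.2 him) hiV) hz.2
      · refine Set.mem_iUnion.2 ⟨i - m, ?_⟩
        rwa [Nat.sub_add_cancel him]
    exact (loebOuter_le u μ _ (fun i n => hCm _ n) hsub).trans hm
  have hdiff2 : loebOuter u μ (uSet u B \ Q) ≤ δ / 2 := by
    have hcara := hQ W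
    have hWQ : W ∩ Q = Q := Set.inter_eq_right.2 hQW
    have hWle : loebOuter u μ W ≤ t := loebOuter_le u μ C hCm Set.Subset.rfl
    have h1 : loebOuter u μ Q + loebOuter u μ (W \ Q) < loebOuter u μ Q + δ / 2 := by
      calc loebOuter u μ Q + loebOuter u μ (W \ Q)
          = loebOuter u μ (W ∩ Q) + loebOuter u μ (W \ Q) := by rw [hWQ]
        _ ≤ loebOuter u μ W := hcara
        _ ≤ t := hWle
        _ < loebOuter u μ Q + δ / 2 := hCs
    have h2 : loebOuter u μ (W \ Q) < δ / 2 :=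
      (ENNReal.add_lt_add_iff_left hQfin).1 h1
    exact (loebOuter_mono u μ (Set.diff_subset_diff_left hBW)).trans h2.le
  calc loebOuter u μ (Q ∆ uSet u B)
      ≤ loebOuter u μ (Q \ uSet u B) + loebOuter u μ (uSet u B \ Q) :=
        loebOuter_symmDiff_le u μ _ _
    _ ≤ δ / 2 + δ / 2 := add_le_add hdiff1 hdiff2
    _ = δ := ENNReal.add_halves δ

/-- The master estimate comparing action statistics of nearby sets. -/
theorem loebOuter_inter_image_est {G : Type*} [Group G]
    (hu : (u : Filter ℕ) ≤ Filter.cofinite) [∀ n, IsProbabilityMeasure (μ n)]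
    {b : ∀ n, G → X n → X n} (hb : ∀ n, IsPMP (μ n) (b n)) (f : G)
    (A A' B B' : Set (UProd u X)) :
    loebOuter u μ (A ∩ uAct u b f '' A')
      ≤ loebOuter u μ (B ∩ uAct u b f '' B')
        + (loebOuter u μ (A ∆ B) + loebOuter u μ (A' ∆ B')) := by
  have h1 := loebOuter_le_add_symmDiff u μ (A ∩ uAct u b f '' A') (B ∩ uAct u b f '' B')
  refine h1.trans ?_
  gcongr
  calc loebOuter u μ ((A ∩ uAct u b f '' A') ∆ (B ∩ uAct u b f '' B'))
      ≤ loebOuter u μ ((A ∆ B) ∪ ((uAct u b f '' A') ∆ (uAct u b f '' B'))) :=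
        loebOuter_mono u μ (symmDiff_inter_subset _ _ _ _)
    _ ≤ loebOuter u μ (A ∆ B) + loebOuter u μ ((uAct u b f '' A') ∆ (uAct u b f '' B')) :=
        loebOuter_union_le u μ _ _
    _ ≤ loebOuter u μ (A ∆ B) + loebOuter u μ (A' ∆ B') := by
        gcongr
        exact loebOuter_image_symmDiff_le u μ hu hb f A' B'

theorem abs_loebOuter_inter_image_est {G : Type*} [Group G]
    (hu : (u : Filter ℕ) ≤ Filter.cofinite) [∀ n, IsProbabilityMeasure (μ n)]
    {b : ∀ n, G → X n → X n} (hb : ∀ n, IsPMP (μ n) (b n)) (f : G)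
    (A A' B B' : Set (UProd u X)) :
    |(loebOuter u μ (A ∩ uAct u b f '' A')).toReal
        - (loebOuter u μ (B ∩ uAct u b f '' B')).toReal|
      ≤ (loebOuter u μ (A ∆ B)).toReal + (loebOuter u μ (A' ∆ B')).toReal := by
  have h1 := loebOuter_inter_image_est u μ hu hb f A A' B B'
  have h2 := loebOuter_inter_image_est u μ hu hb f B B' A A'
  have hsd1 : loebOuter u μ (B ∆ A) = loebOuter u μ (A ∆ B) := by rw [symmDiff_comm]
  have hsd2 : loebOuter u μ (B' ∆ A') = loebOuter u μ (A' ∆ B') := by rw [symmDiff_comm]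
  rw [hsd1, hsd2] at h2
  have habs := abs_toReal_sub_le (loebOuter_ne_top u μ hu _) (loebOuter_ne_top u μ hu _)
    (by
      have := loebOuter_ne_top u μ hu (A ∆ B)
      have := loebOuter_ne_top u μ hu (A' ∆ B')
      simp_all [ENNReal.add_ne_top])
    h1 h2
  refine habs.trans_eq ?_
  rw [ENNReal.toReal_add (loebOuter_ne_top u μ hu _) (loebOuter_ne_top u μ hu _)]

end Loeb3
/-! ### Turning internal approximations into genuine partitions -/

section Loeb4

set_option linter.unusedSectionVars false

variable (u : Ultrafilter ℕ) {X : ℕ → Type*} [∀ n, MeasurableSpace (X n)]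
variable (μ : ∀ n, Measure (X n))

theorem loebOuter_inter_est (A A' B B' : Set (UProd u X)) :
    loebOuter u μ (A ∩ A')
      ≤ loebOuter u μ (B ∩ B') + (loebOuter u μ (A ∆ B) + loebOuter u μ (A' ∆ B')) := by
  refine (loebOuter_le_add_symmDiff u μ (A ∩ A') (B ∩ B')).trans ?_
  gcongr
  calc loebOuter u μ ((A ∩ A') ∆ (B ∩ B'))
      ≤ loebOuter u μ ((A ∆ B) ∪ (A' ∆ B')) :=
        loebOuter_mono u μ (symmDiff_inter_subset _ _ _ _)
    _ ≤ _ := loebOuter_union_le u μ _ _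

theorem loebOuter_finset_biUnion_le {ι : Type*} (s : Finset ι) (S : ι → Set (UProd u X)) :
    loebOuter u μ (⋃ i ∈ s, S i) ≤ ∑ i ∈ s, loebOuter u μ (S i) := by
  classical
  induction s using Finset.induction with
  | empty => simp [loebOuter_empty]
  | @insert a s ha ih =>
      rw [Finset.set_biUnion_insert, Finset.sum_insert ha]
      exact (loebOuter_union_le u μ _ _).trans (by gcongr)

theorem loebOuter_iUnion_fin_le {k : ℕ} (S : Fin k → Set (UProd u X)) :
    loebOuter u μ (⋃ i, S i) ≤ ∑ i, loebOuter u μ (S i) := by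
  have h : (⋃ i, S i) = ⋃ i ∈ Finset.univ, S i := by simp
  rw [h]
  exact loebOuter_finset_biUnion_le u μ Finset.univ S

/-- From internal approximations of the atoms of a Loeb partition, construct a
sequence of genuine partitions of the `X n` whose internal sets are still close
to the atoms. -/
theorem exists_partition_approx (hu : (u : Filter ℕ) ≤ Filter.cofinite)
    [∀ n, IsProbabilityMeasure (μ n)] {k : ℕ} (hk : 0 < k)
    {Q : Fin k → Set (UProd u X)} (hQ : LoebPartition u μ Q)
    {δ : ℝ≥0∞} {B : Fin k → ∀ n, Set (X n)}
    (hBm : ∀ i n, MeasurableSet (B i n))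
    (hBd : ∀ i, loebOuter u μ (Q i ∆ uSet u (B i)) ≤ δ) :
    ∃ C : Fin k → ∀ n, Set (X n),
      (∀ n, IsPartition (fun i => C i n)) ∧
      (∀ i, loebOuter u μ (Q i ∆ uSet u (C i)) ≤ (3 * k + 1) * δ) := by
  classical
  set U : Fin k → ∀ n, Set (X n) :=
    fun i n => ⋃ j : Fin k, (if j < i then B j n else ∅) with hU
  set L : Fin k → ∀ n, Set (X n) :=
    fun i n => if i.val = 0 then (⋃ j, B j n)ᶜ else ∅ with hL
  set C : Fin k → ∀ n, Set (X n) :=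
    fun i n => (B i n \ U i n) ∪ L i n with hC
  have hUm : ∀ i n, MeasurableSet (U i n) := by
    intro i n
    refine MeasurableSet.iUnion fun j => ?_
    by_cases h : j < i <;> simp [h, hBm j n]
  have hLm : ∀ i n, MeasurableSet (L i n) := by
    intro i n
    by_cases h : i.val = 0
    · simp only [hL, h, if_true]
      exact (MeasurableSet.iUnion fun j => hBm j n).compl
    · simp [hL, h]
  have hCm : ∀ i n, MeasurableSet (C i n) :=
    fun i n => ((hBm i n).diff (hUm i n)).union (hLm i n)
  have hCsub : ∀ i n, C i n ⊆ B i n ∪ (⋃ j, B j n)ᶜ := by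
    intro i n x hx
    rcases hx with hx | hx
    · exact Or.inl hx.1
    · simp only [hL] at hx
      by_cases h : i.val = 0
      · rw [if_pos h] at hx; exact Or.inr hx
      · rw [if_neg h] at hx; exact absurd hx (Set.notMem_empty x)
  -- C is a partition of each X n
  have hpart : ∀ n, IsPartition (fun i => C i n) := by
    intro n
    refine ⟨fun i => hCm i n, ?_, ?_⟩
    · have key : ∀ i j : Fin k, i < j → Disjoint (C i n) (C j n) := by
        intro i j hij
        rw [Set.disjoint_left]
        intro x hxi hxj
        have hjL : L j n = ∅ := by
          rw [hL]
          simp only []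
          rw [if_neg]
          intro h0
          have : (i : ℕ) < (j : ℕ) := hij
          omega
        have hxj' : x ∈ B j n \ U j n := by
          rcases hxj with h | h
          · exact h
          · rw [hjL] at h; exact absurd h (Set.notMem_empty x)
        rcases hCsub i n hxi with hxB | hxN
        · apply hxj'.2
          refine Set.mem_iUnion.2 ⟨i, ?_⟩
          rw [if_pos hij]
          exact hxB
        · exact hxN (Set.mem_iUnion.2 ⟨j, hxj'.1⟩)
      intro i j hij
      rcases hij.lt_or_gt with h | h
      · exact key i j h
      · exact (key j i h).symm
    · rw [Set.eq_univ_iff_forall]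
      intro x
      by_cases hx : x ∈ ⋃ j, B j n
      · set s : Finset (Fin k) := Finset.univ.filter (fun j => x ∈ B j n) with hs
        have hsne : s.Nonempty := by
          obtain ⟨j, hj⟩ := Set.mem_iUnion.1 hx
          exact ⟨j, by simp [hs, hj]⟩
        set i₀ := s.min' hsne with hi₀
        have hxB : x ∈ B i₀ n := (Finset.mem_filter.1 (s.min'_mem hsne)).2
        have hxU : x ∉ U i₀ n := by
          intro h
          obtain ⟨j, hj⟩ := Set.mem_iUnion.1 h
          by_cases hji : j < i₀
          · rw [if_pos hji] at hj
            have : j ∈ s := by simp [hs, hj]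
            exact absurd (s.min'_le j this) (not_le.2 hji)
          · rw [if_neg hji] at hj
            exact hj
        exact Set.mem_iUnion.2 ⟨i₀, Or.inl ⟨hxB, hxU⟩⟩
      · refine Set.mem_iUnion.2 ⟨⟨0, hk⟩, Or.inr ?_⟩
        simp only [hL, if_pos rfl]
        exact hx
  refine ⟨C, hpart, fun i => ?_⟩
  -- distance estimate
  have h1 : Q i ∆ uSet u (C i) ⊆ (Q i ∆ uSet u (B i)) ∪ (uSet u (B i) ∆ uSet u (C i)) :=
    symmDiff_triangle (Q i) (uSet u (B i)) (uSet u (C i))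
  have h2 : uSet u (B i) ∆ uSet u (C i) = uSet u (fun n => B i n ∆ C i n) :=
    (uSet_symmDiff u (B i) (C i)).symm
  have h3 : ∀ n, B i n ∆ C i n ⊆ (B i n ∩ U i n) ∪ (⋃ j, B j n)ᶜ := by
    intro n x hx
    rw [Set.mem_symmDiff] at hx
    rcases hx with ⟨hxB, hxC⟩ | ⟨hxC, hxB⟩
    · by_cases hU : x ∈ U i n
      · exact Or.inl ⟨hxB, hU⟩
      · exact absurd (Or.inl ⟨hxB, hU⟩) hxC
    · rcases hCsub i n hxC with h | h
      · exact absurd h hxB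
      · exact Or.inr h
  have h4 : loebOuter u μ (uSet u (fun n => B i n ∆ C i n))
      ≤ loebOuter u μ (uSet u (fun n => B i n ∩ U i n))
        + loebOuter u μ (uSet u (fun n => (⋃ j, B j n)ᶜ)) := by
    calc loebOuter u μ (uSet u (fun n => B i n ∆ C i n))
        ≤ loebOuter u μ (uSet u (fun n => (B i n ∩ U i n) ∪ (⋃ j, B j n)ᶜ)) :=
          loebOuter_mono u μ (uSet_mono u (Eventually.of_forall h3))
      _ = loebOuter u μ (uSet u (fun n => B i n ∩ U i n) ∪ uSet u (fun n => (⋃ j, B j n)ᶜ)) := by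
          rw [uSet_union]
      _ ≤ _ := loebOuter_union_le u μ _ _
  -- first piece: B i ∩ U i
  have h5 : loebOuter u μ (uSet u (fun n => B i n ∩ U i n)) ≤ (k : ℝ≥0∞) * (2 * δ) := by
    have hset : (fun n => B i n ∩ U i n)
        = fun n => ⋃ j : Fin k, (B i n ∩ (if j < i then B j n else ∅)) := by
      funext n
      rw [hU]
      exact Set.inter_iUnion _ _
    rw [hset, uSet_iUnion_fin]
    refine (loebOuter_iUnion_fin_le u μ _).trans ?_
    have hbound : ∀ j : Fin k,
        loebOuter u μ (uSet u (fun n => B i n ∩ (if j < i then B j n else ∅))) ≤ 2 * δ := by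
      intro j
      by_cases hji : j < i
      · have heq : (fun n => B i n ∩ (if j < i then B j n else ∅))
            = fun n => B i n ∩ B j n := by
          funext n; rw [if_pos hji]
        rw [heq, uSet_inter]
        have hij : i ≠ j := fun h => absurd (h ▸ hji) (lt_irrefl i)
        have hdisj : Q i ∩ Q j = ∅ :=
          Set.disjoint_iff_inter_eq_empty.1 (hQ.2.1 hij)
        have hest := loebOuter_inter_est u μ (uSet u (B i)) (uSet u (B j)) (Q i) (Q j)
        rw [hdisj, loebOuter_empty, zero_add] at hest
        refine hest.trans ?_
        rw [symmDiff_comm (uSet u (B i)) (Q i), symmDiff_comm (uSet u (B j)) (Q j),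
          two_mul]
        exact add_le_add (hBd i) (hBd j)
      · have heq : (fun n => B i n ∩ (if j < i then B j n else ∅))
            = fun n => (∅ : Set (X n)) := by
          funext n; rw [if_neg hji, Set.inter_empty]
        rw [heq, uSet_empty, loebOuter_empty]
        exact zero_le
    calc (∑ j : Fin k, loebOuter u μ (uSet u (fun n => B i n ∩ (if j < i then B j n else ∅))))
        ≤ ∑ _j : Fin k, 2 * δ := Finset.sum_le_sum fun j _ => hbound j
      _ = (k : ℝ≥0∞) * (2 * δ) := by
          rw [Finset.sum_const, Finset.card_univ, Fintype.card_fin, nsmul_eq_mul]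
  -- second piece: the leftover
  have h6 : loebOuter u μ (uSet u (fun n => (⋃ j, B j n)ᶜ)) ≤ (k : ℝ≥0∞) * δ := by
    have heq : uSet u (fun n => (⋃ j, B j n)ᶜ) = (⋃ j, uSet u (B j))ᶜ := by
      rw [uSet_compl]
      congr 1
      exact uSet_iUnion_fin u B
    rw [heq]
    have hQuniv : (⋃ j, Q j) = Set.univ := hQ.2.2
    have hstep := loebOuter_le_add_symmDiff u μ ((⋃ j, uSet u (B j))ᶜ) ((⋃ j, Q j)ᶜ)
    have hz : loebOuter u μ ((⋃ j, Q j)ᶜ) = 0 := by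
      rw [hQuniv, Set.compl_univ, loebOuter_empty]
    have hcmpl : ((⋃ j, uSet u (B j))ᶜ) ∆ ((⋃ j, Q j)ᶜ) = (⋃ j, uSet u (B j)) ∆ (⋃ j, Q j) :=
      compl_symmDiff_compl _ _
    rw [hz, hcmpl, zero_add] at hstep
    refine hstep.trans ?_
    calc loebOuter u μ ((⋃ j, uSet u (B j)) ∆ (⋃ j, Q j))
        ≤ loebOuter u μ (⋃ j, (uSet u (B j) ∆ Q j)) :=
          loebOuter_mono u μ (iUnion_symmDiff_subset _ _)
      _ ≤ ∑ j : Fin k, loebOuter u μ (uSet u (B j) ∆ Q j) := loebOuter_iUnion_fin_le u μ _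
      _ ≤ ∑ _j : Fin k, δ := by
          refine Finset.sum_le_sum fun j _ => ?_
          rw [symmDiff_comm]
          exact hBd j
      _ = (k : ℝ≥0∞) * δ := by
          rw [Finset.sum_const, Finset.card_univ, Fintype.card_fin, nsmul_eq_mul]
  calc loebOuter u μ (Q i ∆ uSet u (C i))
      ≤ loebOuter u μ ((Q i ∆ uSet u (B i)) ∪ (uSet u (B i) ∆ uSet u (C i))) :=
        loebOuter_mono u μ h1
    _ ≤ loebOuter u μ (Q i ∆ uSet u (B i)) + loebOuter u μ (uSet u (B i) ∆ uSet u (C i)) :=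
        loebOuter_union_le u μ _ _
    _ ≤ δ + ((k : ℝ≥0∞) * (2 * δ) + (k : ℝ≥0∞) * δ) := by
        refine add_le_add (hBd i) ?_
        rw [h2]
        exact h4.trans (add_le_add h5 h6)
    _ = (3 * k + 1) * δ := by ring

end Loeb4
/-! ### Statistics of internal partitions converge -/

section Final

set_option linter.unusedSectionVars false

variable (u : Ultrafilter ℕ) {G : Type*} [Group G]
variable {X : ℕ → Type*} [∀ n, MeasurableSpace (X n)] (μ : ∀ n, Measure (X n))

theorem statDistL_nonneg {Y : Type*} [MeasurableSpace Y] (ν : Measure Y) (c : G → Y → Y)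
    (T : G → UProd u X → UProd u X) (F : Finset G) {k : ℕ}
    (P : Fin k → Set Y) (Q : Fin k → Set (UProd u X)) :
    0 ≤ statDistL u ν c μ T F P Q := by
  refine Finset.sum_nonneg fun i _ => Finset.sum_nonneg fun j _ =>
    Finset.sum_nonneg fun f _ => abs_nonneg _

/-- The Loeb statistic of internal sets is the ultralimit of the ordinary statistics. -/
theorem loebOuter_stat_eq_ulim (hu : (u : Filter ℕ) ≤ Filter.cofinite)
    [∀ n, IsProbabilityMeasure (μ n)] {b : ∀ n, G → X n → X n}
    (hb : ∀ n, IsPMP (μ n) (b n)) (f : G)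
    (A B : ∀ n, Set (X n)) (hA : ∀ n, MeasurableSet (A n)) (hB : ∀ n, MeasurableSet (B n)) :
    loebOuter u μ (uSet u A ∩ uAct u b f '' uSet u B)
      = ulim u (fun n => μ n (A n ∩ actSet (b n) f (B n))) := by
  have h1 : uAct u b f '' uSet u B = uSet u (fun n => actSet (b n) f (B n)) :=
    uAct_image_uSet u hb f B
  have h2 : uSet u A ∩ uSet u (fun n => actSet (b n) f (B n))
      = uSet u (fun n => A n ∩ actSet (b n) f (B n)) :=
    (uSet_inter u A (fun n => actSet (b n) f (B n))).symm
  rw [h1, h2]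
  exact loebOuter_uSet u μ hu _ (fun n => (hA n).inter (actSet_measurableSet (hb n) f (hB n)))

/-- Main eventual estimate: if the internal statistics of a sequence of partitions is
`e`-close to the statistics of `Q`, then `u`-eventually the ordinary statistics of the
partitions are `(k²|F|)e + ε` close to those of `Q`. -/
theorem eventually_statDistL_le (hu : (u : Filter ℕ) ≤ Filter.cofinite)
    [∀ n, IsProbabilityMeasure (μ n)] {b : ∀ n, G → X n → X n}
    (hb : ∀ n, IsPMP (μ n) (b n)) (F : Finset G) {k : ℕ}
    (P : ∀ n, Fin k → Set (X n)) (hPpart : ∀ n, IsPartition (P n))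
    (Q : Fin k → Set (UProd u X)) {e ε : ℝ} (hε : 0 < ε)
    (hclose : ∀ (i j : Fin k), ∀ f ∈ F,
      |(loebOuter u μ (uSet u (fun n => P n i) ∩ uAct u b f '' uSet u (fun n => P n j))).toReal
        - (loebOuter u μ (Q i ∩ uAct u b f '' Q j)).toReal| ≤ e) :
    ∀ᶠ n in (u : Filter ℕ),
      statDistL u (μ n) (b n) μ (uAct u b) F (P n) Q
        ≤ (k * k * F.card : ℝ) * e + ε := by
  classical
  set N : ℝ := (k * k * F.card : ℝ) with hN
  have hN0 : 0 ≤ N := by positivity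
  set ε' : ℝ := ε / (N + 1) with hε'
  have hε'0 : 0 < ε' := by positivity
  set v : Fin k → Fin k → G → ℝ≥0∞ := fun i j f =>
    loebOuter u μ (uSet u (fun n => P n i) ∩ uAct u b f '' uSet u (fun n => P n j)) with hv
  have hvul : ∀ i j f, v i j f = ulim u (fun n => μ n (P n i ∩ actSet (b n) f (P n j))) := by
    intro i j f
    exact loebOuter_stat_eq_ulim u μ hu hb f _ _
      (fun n => (hPpart n).1 i) (fun n => (hPpart n).1 j)
  have htend : ∀ i j f, Tendsto (fun n => (μ n (P n i ∩ actSet (b n) f (P n j))).toReal)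
      (u : Filter ℕ) (𝓝 (v i j f).toReal) := by
    intro i j f
    have hfin : v i j f ≠ ∞ := loebOuter_ne_top u μ hu _
    have := (ENNReal.tendsto_toReal hfin).comp (by rw [hvul i j f]; exact ulim_spec u _)
    exact this
  have hall : ∀ᶠ n in (u : Filter ℕ), ∀ i : Fin k, ∀ j : Fin k, ∀ f ∈ F,
      |(μ n (P n i ∩ actSet (b n) f (P n j))).toReal - (v i j f).toReal| < ε' := by
    rw [eventually_all]
    intro i
    rw [eventually_all]
    intro j
    rw [eventually_all_finset]
    intro f hf
    have := Metric.tendsto_nhds.1 (htend i j f) ε' hε'0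
    filter_upwards [this] with n hn
    rwa [Real.dist_eq] at hn
  filter_upwards [hall] with n hn
  have hterm : ∀ i j : Fin k, ∀ f ∈ F,
      |(μ n (P n i ∩ actSet (b n) f (P n j))).toReal
        - (loebOuter u μ (Q i ∩ uAct u b f '' Q j)).toReal| ≤ ε' + e := by
    intro i j f hf
    calc |(μ n (P n i ∩ actSet (b n) f (P n j))).toReal
          - (loebOuter u μ (Q i ∩ uAct u b f '' Q j)).toReal|
        ≤ |(μ n (P n i ∩ actSet (b n) f (P n j))).toReal - (v i j f).toReal|
          + |(v i j f).toReal - (loebOuter u μ (Q i ∩ uAct u b f '' Q j)).toReal| :=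
          abs_sub_le _ _ _
      _ ≤ ε' + e := add_le_add (hn i j f hf).le (hclose i j f hf)
  calc statDistL u (μ n) (b n) μ (uAct u b) F (P n) Q
      ≤ ∑ _i : Fin k, ∑ _j : Fin k, ∑ _f ∈ F, (ε' + e) := by
        refine Finset.sum_le_sum fun i _ => Finset.sum_le_sum fun j _ =>
          Finset.sum_le_sum fun f hf => hterm i j f hf
    _ = N * (ε' + e) := by
        simp only [Finset.sum_const, Finset.card_univ, Fintype.card_fin, smul_eq_mul,
          nsmul_eq_mul, hN]
        push_cast
        ring
    _ = N * e + N * ε' := by ring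
    _ ≤ N * e + ε := by
        have h1 : N * ε' ≤ (N + 1) * ε' := by
          have := hε'0.le
          nlinarith
        have h2 : (N + 1) * ε' = ε := by
          rw [hε']
          field_simp
        linarith
    _ = (k * k * F.card : ℝ) * e + ε := by rw [hN]

end Final
section Final2

set_option linter.unusedSectionVars false

variable (u : Ultrafilter ℕ) {G : Type*} [Group G]
variable {X : ℕ → Type*} [∀ n, MeasurableSpace (X n)] (μ : ∀ n, Measure (X n))

/-- Part (i) workhorse: `u`-eventually, `X n` admits a partition whose statistics are
`ε`-close to those of the Loeb partition `Q`. -/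
theorem eventually_exists_partition (hu : (u : Filter ℕ) ≤ Filter.cofinite)
    [∀ n, IsProbabilityMeasure (μ n)] {b : ∀ n, G → X n → X n}
    (hb : ∀ n, IsPMP (μ n) (b n)) (F : Finset G) {k : ℕ} (hk : 0 < k)
    {Q : Fin k → Set (UProd u X)} (hQ : LoebPartition u μ Q) {ε : ℝ} (hε : 0 < ε) :
    ∀ᶠ n in (u : Filter ℕ), ∃ P : Fin k → Set (X n), IsPartition P ∧
      statDistL u (μ n) (b n) μ (uAct u b) F P Q ≤ ε := by
  classical
  set N : ℝ := (k * k * F.card : ℝ) with hN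
  have hN0 : 0 ≤ N := by positivity
  set e : ℝ := ε / (2 * (N + 1)) with he
  have he0 : 0 < e := by positivity
  set K : ℝ≥0∞ := 3 * (k : ℝ≥0∞) + 1 with hK
  have hK0 : K ≠ 0 := by
    have : (0 : ℝ≥0∞) < K := by
      rw [hK]
      exact lt_of_lt_of_le zero_lt_one le_add_self
    exact this.ne'
  have hKtop : K ≠ ∞ := by
    rw [hK]
    exact ENNReal.add_ne_top.2
      ⟨ENNReal.mul_ne_top (by simp) (ENNReal.natCast_ne_top k), ENNReal.one_ne_top⟩
  set δ : ℝ≥0∞ := ENNReal.ofReal (e / 2) / K with hδdef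
  have hδ0 : 0 < δ :=
    ENNReal.div_pos (ENNReal.ofReal_pos.2 (by positivity)).ne' hKtop
  have hδtop : δ ≠ ∞ := (ENNReal.div_lt_top ENNReal.ofReal_ne_top hK0).ne
  have hKδ : K * δ = ENNReal.ofReal (e / 2) := by
    rw [hδdef]
    exact ENNReal.mul_div_cancel hK0 hKtop
  have hBex : ∀ i : Fin k, ∃ B : ∀ n, Set (X n), (∀ n, MeasurableSet (B n)) ∧
      loebOuter u μ (Q i ∆ uSet u B) ≤ δ := fun i =>
    exists_internal_approx u μ hu (hQ.1 i) hδ0 hδtop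
  choose B hBm hBd using hBex
  obtain ⟨C, hCpart, hCd⟩ := exists_partition_approx u μ hu hk hQ hBm hBd
  have hCd' : ∀ i, (loebOuter u μ (uSet u (C i) ∆ Q i)).toReal ≤ e / 2 := by
    intro i
    rw [symmDiff_comm]
    refine ENNReal.toReal_le_of_le_ofReal (by positivity) ?_
    refine (hCd i).trans ?_
    rw [← hKδ, hK]
  have hclose : ∀ (i j : Fin k), ∀ f ∈ F,
      |(loebOuter u μ (uSet u (fun n => C i n) ∩ uAct u b f '' uSet u (fun n => C j n))).toReal
        - (loebOuter u μ (Q i ∩ uAct u b f '' Q j)).toReal| ≤ e := by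
    intro i j f _
    have hest := abs_loebOuter_inter_image_est u μ hu hb f
      (uSet u (C i)) (uSet u (C j)) (Q i) (Q j)
    refine hest.trans ?_
    calc (loebOuter u μ (uSet u (C i) ∆ Q i)).toReal
          + (loebOuter u μ (uSet u (C j) ∆ Q j)).toReal
        ≤ e / 2 + e / 2 := add_le_add (hCd' i) (hCd' j)
      _ = e := by ring
  have hmain := eventually_statDistL_le u μ hu hb F (fun n i => C i n) hCpart Q
    (e := e) (ε := ε / 2) (by positivity) hclose
  filter_upwards [hmain] with n hn
  refine ⟨fun i => C i n, hCpart n, hn.trans ?_⟩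
  have h1 : (k * k * F.card : ℝ) * e ≤ ε / 2 := by
    have h2 : N * e ≤ (N + 1) * e := by nlinarith
    have h3 : (N + 1) * e = ε / 2 := by
      rw [he]
      field_simp
    rw [← hN]
    linarith
  linarith

/-- The trivial partition with first atom `univ`. -/
theorem isPartition_default {Y : Type*} [MeasurableSpace Y] {k : ℕ} (hk : 0 < k) :
    IsPartition (fun i : Fin k => if i.val = 0 then (Set.univ : Set Y) else ∅) := by
  refine ⟨fun i => ?_, ?_, ?_⟩
  · by_cases h : i.val = 0 <;> simp [h]
  · intro i j hij
    rw [Function.onFun, Set.disjoint_left]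
    intro x hxi hxj
    by_cases hi : i.val = 0
    · by_cases hj : j.val = 0
      · exact hij (Fin.ext (hi.trans hj.symm))
      · rw [if_neg hj] at hxj; exact hxj
    · rw [if_neg hi] at hxi; exact hxi
  · rw [Set.eq_univ_iff_forall]
    intro x
    refine Set.mem_iUnion.2 ⟨⟨0, hk⟩, ?_⟩
    simp

/-- The internal sets of a sequence of partitions form a Loeb partition. -/
theorem loebPartition_uSet [∀ n, IsProbabilityMeasure (μ n)] {k : ℕ}
    (P : ∀ n, Fin k → Set (X n)) (hP : ∀ n, IsPartition (P n)) :
    LoebPartition u μ (fun i => uSet u (fun n => P n i)) := by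
  refine ⟨fun i => loebMeasurable_uSet u μ _ (fun n => (hP n).1 i), ?_, ?_⟩
  · intro i j hij
    rw [Function.onFun, Set.disjoint_iff_inter_eq_empty, ← uSet_inter]
    have hempty : (fun n => P n i ∩ P n j) = fun n => (∅ : Set (X n)) := by
      funext n
      exact Set.disjoint_iff_inter_eq_empty.1 ((hP n).2.1 hij)
    rw [hempty, uSet_empty]
  · rw [← uSet_iUnion_fin]
    have huniv : (fun n => ⋃ i, P n i) = fun n => (Set.univ : Set (X n)) := by
      funext n
      exact (hP n).2.2
    rw [huniv, uSet_univ]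

theorem dPartToLoeb_nonneg {Y : Type*} [MeasurableSpace Y] (ν : Measure Y) (c : G → Y → Y)
    (T : G → UProd u X → UProd u X) (F : Finset G) {k : ℕ} (P : Fin k → Set Y) :
    0 ≤ dPartToLoeb u ν c μ T F P := by
  refine Real.sInf_nonneg ?_
  rintro r ⟨Q, hQ, rfl⟩
  exact statDistL_nonneg u μ ν c T F P Q

end Final2

/-- The ultraproduct action `a_u` of a sequence of pmp actions `a_n`
is the WC-limit of the sequence along `u`: for every finite `F ⊆ G`, (i) for every
finite Loeb partition `Q`, `lim_u d_{F,Q}(a_u, a_n) = 0`, and (ii) for every `k`,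
`lim_u d_{F,k}(a_n, a_u) = 0`. -/
theorem ultraproduct_is_wc_limit {G : Type*} [Group G] [Countable G]
    (u : Ultrafilter ℕ) (hu : (u : Filter ℕ) ≤ Filter.cofinite)
    {X : ℕ → Type*} [∀ n, MeasurableSpace (X n)]
    (μ : ∀ n, Measure (X n)) [∀ n, IsProbabilityMeasure (μ n)]
    (b : ∀ n, G → X n → X n) (hb : ∀ n, IsPMP (μ n) (b n)) :
    ∀ F : Finset G,
      (∀ (k : ℕ) (Q : Fin k → Set (UProd u X)), LoebPartition u μ Q →
        Tendsto (fun n => dPartFromLoeb u μ (uAct u b) F Q (μ n) (b n))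
          (u : Filter ℕ) (nhds 0)) ∧
      (∀ k : ℕ,
        Tendsto (fun n => dNumToLoeb u (μ n) (b n) μ (uAct u b) F k)
          (u : Filter ℕ) (nhds 0)) := by
  intro F
  constructor
  · -- (i) partitions of the Loeb space are captured by partitions of the `X n`
    intro k Q hQ
    rcases Nat.eq_zero_or_pos k with hk0 | hk
    · exfalso
      subst hk0
      set z : UProd u X := uMk u (fun n => (nonempty_of_prob (μ n)).some) with hz
      have hz2 : z ∈ ⋃ i : Fin 0, Q i := hQ.2.2 ▸ Set.mem_univ z
      obtain ⟨i, _⟩ := Set.mem_iUnion.1 hz2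
      exact i.elim0
    · rw [Metric.tendsto_nhds]
      intro ε hε
      have hhalf : (0 : ℝ) < ε / 2 := by positivity
      filter_upwards [eventually_exists_partition u μ hu hb F hk hQ hhalf] with n hn
      obtain ⟨P, hP, hPd⟩ := hn
      have hbdd : BddBelow {r : ℝ | ∃ P : Fin k → Set (X n), IsPartition P ∧
          r = statDistL u (μ n) (b n) μ (uAct u b) F P Q} := by
        refine ⟨0, ?_⟩
        rintro r ⟨P', _, rfl⟩
        exact statDistL_nonneg u μ (μ n) (b n) (uAct u b) F P' Q
      have h0 : 0 ≤ dPartFromLoeb u μ (uAct u b) F Q (μ n) (b n) := by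
        refine Real.sInf_nonneg ?_
        rintro r ⟨P', _, rfl⟩
        exact statDistL_nonneg u μ (μ n) (b n) (uAct u b) F P' Q
      have hle : dPartFromLoeb u μ (uAct u b) F Q (μ n) (b n) ≤ ε / 2 :=
        (csInf_le hbdd ⟨P, hP, rfl⟩).trans hPd
      rw [Real.dist_eq, sub_zero, abs_of_nonneg h0]
      linarith
  · -- (ii) partitions of the `X n` are captured by Loeb partitions
    intro k
    rcases Nat.eq_zero_or_pos k with hk0 | hk
    · subst hk0
      have hconst : ∀ n, dNumToLoeb u (μ n) (b n) μ (uAct u b) F 0 = 0 := by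
        intro n
        have hempty : {r : ℝ | ∃ P : Fin 0 → Set (X n), IsPartition P ∧
            r = dPartToLoeb u (μ n) (b n) μ (uAct u b) F P} = ∅ := by
          rw [Set.eq_empty_iff_forall_notMem]
          rintro r ⟨P, hP, _⟩
          have hx := (nonempty_of_prob (μ n)).some
          have hmem : hx ∈ ⋃ i : Fin 0, P i := hP.2.2 ▸ Set.mem_univ _
          obtain ⟨i, _⟩ := Set.mem_iUnion.1 hmem
          exact i.elim0
        rw [dNumToLoeb, hempty, Real.sSup_empty]
      have heq : (fun n => dNumToLoeb u (μ n) (b n) μ (uAct u b) F 0)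
          = fun _ => (0 : ℝ) := funext hconst
      rw [heq]
      exact tendsto_const_nhds
    · rw [Metric.tendsto_nhds]
      intro ε hε
      by_contra hc
      rw [Filter.not_eventually] at hc
      have hc' := Ultrafilter.frequently_iff_eventually.1 hc
      have hd0 : ∀ n, 0 ≤ dNumToLoeb u (μ n) (b n) μ (uAct u b) F k := by
        intro n
        refine Real.sSup_nonneg ?_
        rintro r ⟨P, _, rfl⟩
        exact dPartToLoeb_nonneg u μ (μ n) (b n) (uAct u b) F P
      have hT : ∀ᶠ n in (u : Filter ℕ), ε ≤ dNumToLoeb u (μ n) (b n) μ (uAct u b) F k := by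
        filter_upwards [hc'] with n hn
        rw [Real.dist_eq, sub_zero, abs_of_nonneg (hd0 n)] at hn
        exact not_lt.1 hn
      have hchoice : ∀ n, ∃ P : Fin k → Set (X n), IsPartition P ∧
          (ε ≤ dNumToLoeb u (μ n) (b n) μ (uAct u b) F k →
            ε / 2 < dPartToLoeb u (μ n) (b n) μ (uAct u b) F P) := by
        intro n
        by_cases hn : ε ≤ dNumToLoeb u (μ n) (b n) μ (uAct u b) F k
        · set s := {r : ℝ | ∃ P : Fin k → Set (X n), IsPartition P ∧
              r = dPartToLoeb u (μ n) (b n) μ (uAct u b) F P} with hs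
          have hSup : dNumToLoeb u (μ n) (b n) μ (uAct u b) F k = sSup s := rfl
          have hne : s.Nonempty := by
            by_contra hemp
            rw [Set.not_nonempty_iff_eq_empty] at hemp
            rw [hSup, hemp, Real.sSup_empty] at hn
            linarith
          have hlt : ε / 2 < sSup s := lt_of_lt_of_le (half_lt_self hε) (hSup ▸ hn)
          obtain ⟨r, hrs, hr⟩ := exists_lt_of_lt_csSup hne hlt
          obtain ⟨P, hP, rfl⟩ := hrs
          exact ⟨P, hP, fun _ => hr⟩
        · exact ⟨_, isPartition_default hk, fun h => absurd h hn⟩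
      choose P hP1 hP2 using hchoice
      set Q : Fin k → Set (UProd u X) := fun i => uSet u (fun n => P n i) with hQdef
      have hQloeb : LoebPartition u μ Q := loebPartition_uSet u μ P hP1
      have hclose : ∀ (i j : Fin k), ∀ f ∈ F,
          |(loebOuter u μ (uSet u (fun n => P n i)
              ∩ uAct u b f '' uSet u (fun n => P n j))).toReal
            - (loebOuter u μ (Q i ∩ uAct u b f '' Q j)).toReal| ≤ (0 : ℝ) := by
        intro i j f _
        simp [hQdef]
      have hmain := eventually_statDistL_le u μ hu hb F P hP1 Q
        (e := 0) (ε := ε / 4) (by positivity) hclose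
      have hfin : ∀ᶠ n in (u : Filter ℕ),
          dPartToLoeb u (μ n) (b n) μ (uAct u b) F (P n) ≤ ε / 2 := by
        filter_upwards [hmain] with n hn
        have hbdd : BddBelow {r : ℝ | ∃ Q' : Fin k → Set (UProd u X),
            LoebPartition u μ Q' ∧ r = statDistL u (μ n) (b n) μ (uAct u b) F (P n) Q'} := by
          refine ⟨0, ?_⟩
          rintro r ⟨Q', _, rfl⟩
          exact statDistL_nonneg u μ (μ n) (b n) (uAct u b) F (P n) Q'
        have hle := csInf_le hbdd ⟨Q, hQloeb, rfl⟩
        have hsmall : statDistL u (μ n) (b n) μ (uAct u b) F (P n) Q ≤ ε / 2 := by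
          refine hn.trans ?_
          rw [mul_zero, zero_add]
          linarith
        exact hle.trans hsmall
      obtain ⟨n, hn1, hn2⟩ := (hT.and hfin).exists
      exact absurd hn2 (not_le.2 (hP2 n hn1))
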